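/- Let G be a finite group, M a semi-Mackey functor on G, and S ⊆ M(G/e) a saturated G-invariant submonoid of the monoid M evaluated at the free orbit G/e. For each transitive finite G-set X, define ℒ_S(X) = γ_{X*}(S) for any G-map γ_X : G/e → X. Then this definition is independent of the choice of γ_X, and ℒ_S (extended additively to all finite G-sets) is a semi-Mackey subfunctor of M satisfying ℒ_S(G/e) = S; moreover it is the minimum semi-Mackey subfunctor 𝒮 with S ⊆ 𝒮(G/e). -/

import Mathlib

/-- A finite `G`-set: a finite type equipped with a `G`-action. -/
structure FinGSet (G : Type) [Group G] where
  carrier : Type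
  [fin : Fintype carrier]
  [act : MulAction G carrier]

attribute [instance] FinGSet.fin FinGSet.act

/-- A map of `G`-sets is equivariant if it commutes with the action. -/
def IsEquivariant {G : Type} [Group G] {X Y : FinGSet G}
    (f : X.carrier → Y.carrier) : Prop :=
  ∀ (g : G) (x : X.carrier), f (g • x) = g • f x

/-- The disjoint union of two finite `G`-sets. -/
def FinGSet.sum {G : Type} [Group G] (X Y : FinGSet G) : FinGSet G where
  carrier := X.carrier ⊕ Y.carrier

/-- A semi-Mackey functor on `G` with underlying family of commutative monoids `N`:
a contravariant functor `res` (restriction) and a covariant functor `tr`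
(transfer) on finite `G`-sets, additive on disjoint unions and satisfying the
Mackey (base change) condition on all pullback diagrams. -/
structure SemiMackey (G : Type) [Group G] (N : FinGSet G → Type)
    [∀ X, CommMonoid (N X)] where
  res : ∀ {X Y : FinGSet G} (f : X.carrier → Y.carrier), IsEquivariant f → (N Y →* N X)
  tr : ∀ {X Y : FinGSet G} (f : X.carrier → Y.carrier), IsEquivariant f → (N X →* N Y)
  res_id : ∀ (X : FinGSet G) (h : IsEquivariant (id : X.carrier → X.carrier)) (m : N X),
    res id h m = m
  tr_id : ∀ (X : FinGSet G) (h : IsEquivariant (id : X.carrier → X.carrier)) (m : N X),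
    tr id h m = m
  res_comp : ∀ {X Y Z : FinGSet G} (f : X.carrier → Y.carrier) (hf : IsEquivariant f)
    (g : Y.carrier → Z.carrier) (hg : IsEquivariant g)
    (hgf : IsEquivariant (g ∘ f)) (m : N Z),
    res (g ∘ f) hgf m = res f hf (res g hg m)
  tr_comp : ∀ {X Y Z : FinGSet G} (f : X.carrier → Y.carrier) (hf : IsEquivariant f)
    (g : Y.carrier → Z.carrier) (hg : IsEquivariant g)
    (hgf : IsEquivariant (g ∘ f)) (m : N X),
    tr (g ∘ f) hgf m = tr g hg (tr f hf m)
  additive : ∀ (X Y : FinGSet G)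
    (h₁ : IsEquivariant (X := X) (Y := FinGSet.sum X Y) Sum.inl)
    (h₂ : IsEquivariant (X := Y) (Y := FinGSet.sum X Y) Sum.inr),
    Function.Bijective (fun m : N (FinGSet.sum X Y) => (res Sum.inl h₁ m, res Sum.inr h₂ m))
  mackey : ∀ {P X W Y : FinGSet G}
    (f : X.carrier → Y.carrier) (hf : IsEquivariant f)
    (g : W.carrier → Y.carrier) (hg : IsEquivariant g)
    (pX : P.carrier → X.carrier) (hpX : IsEquivariant pX)
    (pW : P.carrier → W.carrier) (hpW : IsEquivariant pW)
    (hcomm : ∀ p, f (pX p) = g (pW p)),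
    Function.Bijective
      (fun p : P.carrier =>
        (⟨(pX p, pW p), hcomm p⟩ : {q : X.carrier × W.carrier // f q.1 = g q.2})) →
    ∀ m : N W, res f hf (tr g hg m) = tr pX hpX (res pW hpW m)

/-- The saturation of a subset of a commutative monoid. -/
def satSet {M : Type*} [CommMonoid M] (S : Set M) : Set M :=
  {x | ∃ a : M, ∃ s ∈ S, a * x = s}

/-- The free orbit `G/e`, i.e. `G` with the left translation action. -/
abbrev GeObj (G : Type) [Group G] [Fintype G] : FinGSet G where
  carrier := G

theorem rmul_equivariant {G : Type} [Group G] [Fintype G] (g : G) :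
    IsEquivariant (X := GeObj G) (Y := GeObj G) (fun x => x * g) :=
  fun a x => by simp [GeObj, smul_eq_mul, mul_assoc]

/-- The subfunctor `ℒ_S` generated by a subset of `M(G/e)`: on each `X` it is
the submonoid generated by the images of `S` under all transfers along
equivariant maps `G/e → X`. -/
def minSub {G : Type} [Group G] [Fintype G] {N : FinGSet G → Type}
    [∀ X, CommMonoid (N X)] (M : SemiMackey G N)
    (S : Submonoid (N (GeObj G))) : ∀ X : FinGSet G, Submonoid (N X) :=
  fun X => Submonoid.closure
    (⋃ (γ : (GeObj G).carrier → X.carrier) (hγ : IsEquivariant γ),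
      (M.tr γ hγ) '' (S : Set (N (GeObj G))))

set_option linter.unusedSectionVars false

section Aux

variable {G : Type} [Group G] [Fintype G] {N : FinGSet G → Type}
    [∀ X, CommMonoid (N X)] (M : SemiMackey G N)

theorem res_congr {X Y : FinGSet G} {f f' : X.carrier → Y.carrier} (h : f = f')
    (hf : IsEquivariant f) (hf' : IsEquivariant f') (m : N Y) :
    M.res f hf m = M.res f' hf' m := by subst h; rfl

theorem tr_congr {X Y : FinGSet G} {f f' : X.carrier → Y.carrier} (h : f = f')
    (hf : IsEquivariant f) (hf' : IsEquivariant f') (m : N X) :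
    M.tr f hf m = M.tr f' hf' m := by subst h; rfl

theorem id_equivariant (X : FinGSet G) : IsEquivariant (id : X.carrier → X.carrier) :=
  fun _ _ => rfl

theorem comp_equivariant {X Y Z : FinGSet G} {f : X.carrier → Y.carrier}
    (hf : IsEquivariant f) {g : Y.carrier → Z.carrier} (hg : IsEquivariant g) :
    IsEquivariant (g ∘ f) := fun a x => by
  simp only [Function.comp_apply]; rw [hf, hg]

theorem inv_equivariant {X Y : FinGSet G} {f : X.carrier → Y.carrier}
    (hf : IsEquivariant f) {g : Y.carrier → X.carrier}
    (hgf : ∀ x, g (f x) = x) (hfg : ∀ y, f (g y) = y) : IsEquivariant g := fun a y => by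
  conv_lhs => rw [← hfg y]
  rw [← hf, hgf]

theorem res_tr_of_injective {X Y : FinGSet G} (f : X.carrier → Y.carrier)
    (hf : IsEquivariant f) (hinj : Function.Injective f) (m : N X) :
    M.res f hf (M.tr f hf m) = m := by
  have h := M.mackey f hf f hf id (id_equivariant X) id (id_equivariant X)
    (fun _ => rfl) ?_ m
  · rw [h, M.tr_id, M.res_id]
  · constructor
    · intro a b hab
      exact congrArg (fun q => q.1.1) hab
    · rintro ⟨⟨a, b⟩, hab⟩
      exact ⟨a, Subtype.ext (Prod.ext rfl (hinj hab))⟩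

theorem tr_eq_res_inv {X Y : FinGSet G} (f : X.carrier → Y.carrier) (hf : IsEquivariant f)
    (g : Y.carrier → X.carrier) (hg : IsEquivariant g)
    (hgf : ∀ x, g (f x) = x) (hfg : ∀ y, f (g y) = y) (m : N X) :
    M.tr f hf m = M.res g hg m := by
  have h1 : M.res f hf (M.tr f hf m) = m :=
    res_tr_of_injective M f hf (Function.LeftInverse.injective hgf) m
  have h2 : M.res (f ∘ g) (comp_equivariant hg hf) (M.tr f hf m)
      = M.res g hg (M.res f hf (M.tr f hf m)) := M.res_comp g hg f hf _ _
  rw [h1] at h2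
  rw [← h2, res_congr M (show f ∘ g = id from funext hfg) _ (id_equivariant Y), M.res_id]

theorem tr_res_iso {X Y : FinGSet G} (f : X.carrier → Y.carrier) (hf : IsEquivariant f)
    (g : Y.carrier → X.carrier) (hg : IsEquivariant g)
    (hgf : ∀ x, g (f x) = x) (hfg : ∀ y, f (g y) = y) (m : N Y) :
    M.tr f hf (M.res f hf m) = m := by
  rw [tr_eq_res_inv M f hf g hg hgf hfg]
  have h2 : M.res (f ∘ g) (comp_equivariant hg hf) m
      = M.res g hg (M.res f hf m) := M.res_comp g hg f hf _ _
  rw [← h2, res_congr M (show f ∘ g = id from funext hfg) _ (id_equivariant Y), M.res_id]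

/-- The empty `G`-set. -/
@[reducible] def emptyG (G : Type) [Group G] : FinGSet G where
  carrier := PEmpty
  act :=
    { smul := fun _ x => x.elim
      one_smul := fun x => x.elim
      mul_smul := fun _ _ x => x.elim }

include M in
theorem subsingleton_of_isEmpty (X : FinGSet G) (hX : IsEmpty X.carrier) :
    Subsingleton (N X) := by
  constructor
  intro a b
  have h₁ : IsEquivariant (X := X) (Y := FinGSet.sum X X) Sum.inl :=
    fun g x => (hX.false x).elim
  have h₂ : IsEquivariant (X := X) (Y := FinGSet.sum X X) Sum.inr :=
    fun g x => (hX.false x).elim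
  obtain ⟨m, hm⟩ := (M.additive X X h₁ h₂).2 (a, b)
  have heq : (Sum.inl : X.carrier → (FinGSet.sum X X).carrier) = Sum.inr :=
    funext fun x => (hX.false x).elim
  have h3 : M.res Sum.inl h₁ m = M.res Sum.inr h₂ m := res_congr M heq h₁ h₂ m
  have ha : M.res Sum.inl h₁ m = a := congrArg Prod.fst hm
  have hb : M.res Sum.inr h₂ m = b := congrArg Prod.snd hm
  rw [← ha, ← hb, h3]

include M in
theorem tr_from_empty {X Y : FinGSet G} (hX : IsEmpty X.carrier)
    (f : X.carrier → Y.carrier) (hf : IsEquivariant f) (m : N X) :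
    M.tr f hf m = 1 := by
  haveI := subsingleton_of_isEmpty M X hX
  rw [Subsingleton.elim m 1, map_one]

include M in
theorem res_inl_tr_inr {X Y : FinGSet G}
    (h₁ : IsEquivariant (X := X) (Y := FinGSet.sum X Y) Sum.inl)
    (h₂ : IsEquivariant (X := Y) (Y := FinGSet.sum X Y) Sum.inr) (m : N Y) :
    M.res Sum.inl h₁ (M.tr (X := Y) (Y := FinGSet.sum X Y) Sum.inr h₂ m) = 1 := by
  have hpX : IsEquivariant (X := emptyG G) (Y := X) (fun (p : PEmpty) => p.elim) :=
    fun g (x : PEmpty) => x.elim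
  have hpW : IsEquivariant (X := emptyG G) (Y := Y) (fun (p : PEmpty) => p.elim) :=
    fun g (x : PEmpty) => x.elim
  have h := M.mackey (P := emptyG G) (X := X) (W := Y) (Y := FinGSet.sum X Y) Sum.inl h₁ Sum.inr h₂ _ hpX _ hpW (fun (p : PEmpty) => p.elim) ?_ m
  · rw [h, tr_from_empty M (X := emptyG G) ⟨fun (x : PEmpty) => x.elim⟩]
  · constructor
    · intro a; exact a.elim
    · rintro ⟨⟨x, y⟩, h⟩; exact absurd h (by simp)

include M in
theorem res_inr_tr_inl {X Y : FinGSet G}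
    (h₁ : IsEquivariant (X := X) (Y := FinGSet.sum X Y) Sum.inl)
    (h₂ : IsEquivariant (X := Y) (Y := FinGSet.sum X Y) Sum.inr) (m : N X) :
    M.res Sum.inr h₂ (M.tr (X := X) (Y := FinGSet.sum X Y) Sum.inl h₁ m) = 1 := by
  have hpX : IsEquivariant (X := emptyG G) (Y := Y) (fun (p : PEmpty) => p.elim) :=
    fun g (x : PEmpty) => x.elim
  have hpW : IsEquivariant (X := emptyG G) (Y := X) (fun (p : PEmpty) => p.elim) :=
    fun g (x : PEmpty) => x.elim
  have h := M.mackey (P := emptyG G) (X := Y) (W := X) (Y := FinGSet.sum X Y) Sum.inr h₂ Sum.inl h₁ _ hpX _ hpW (fun (p : PEmpty) => p.elim) ?_ m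
  · rw [h, tr_from_empty M (X := emptyG G) ⟨fun (x : PEmpty) => x.elim⟩]
  · constructor
    · intro a; exact a.elim
    · rintro ⟨⟨x, y⟩, h⟩; exact absurd h (by simp)

include M in
theorem sum_decomp {X Y : FinGSet G}
    (h₁ : IsEquivariant (X := X) (Y := FinGSet.sum X Y) Sum.inl)
    (h₂ : IsEquivariant (X := Y) (Y := FinGSet.sum X Y) Sum.inr)
    (m : N (FinGSet.sum X Y)) :
    m = M.tr Sum.inl h₁ (M.res Sum.inl h₁ m) * M.tr Sum.inr h₂ (M.res Sum.inr h₂ m) := by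
  apply (M.additive X Y h₁ h₂).1
  have e1 := res_tr_of_injective M (X := X) (Y := FinGSet.sum X Y) (Sum.inl : X.carrier → (FinGSet.sum X Y).carrier) h₁
    Sum.inl_injective
  have e2 := res_tr_of_injective M (X := Y) (Y := FinGSet.sum X Y) (Sum.inr : Y.carrier → (FinGSet.sum X Y).carrier) h₂
    Sum.inr_injective
  simp only [map_mul, e1, e2, res_inl_tr_inr M h₁ h₂, res_inr_tr_inl M h₁ h₂,
    mul_one, one_mul, Prod.mk.injEq]

/-- A `G`-invariant subset of a finite `G`-set, as a `G`-set. -/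
@[reducible] noncomputable def subGSet (P : FinGSet G) (A : Set P.carrier)
    (hA : ∀ (g : G), ∀ x ∈ A, g • x ∈ A) : FinGSet G where
  carrier := {x // x ∈ A}
  fin := Fintype.ofFinite _
  act :=
    { smul := fun g x => ⟨g • x.1, hA g x.1 x.2⟩
      one_smul := fun x => Subtype.ext (one_smul G x.1)
      mul_smul := fun g h x => Subtype.ext (mul_smul g h x.1) }

theorem subGSet_val_equivariant (P : FinGSet G) (A : Set P.carrier)
    (hA : ∀ (g : G), ∀ x ∈ A, g • x ∈ A) :
    IsEquivariant (X := subGSet P A hA) (Y := P) Subtype.val := fun _ _ => rfl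

include M in
theorem tr_decomp {P X : FinGSet G} (p : P.carrier → X.carrier) (hp : IsEquivariant p)
    (A : Set P.carrier) (hA : ∀ (g : G), ∀ x ∈ A, g • x ∈ A)
    (hA' : ∀ (g : G), ∀ x ∈ Aᶜ, g • x ∈ Aᶜ) (m : N P) :
    M.tr p hp m =
      M.tr (p ∘ Subtype.val)
        (comp_equivariant (subGSet_val_equivariant P A hA) hp)
        (M.res (X := subGSet P A hA) (Y := P) Subtype.val (subGSet_val_equivariant P A hA) m) *
      M.tr (p ∘ Subtype.val)
        (comp_equivariant (subGSet_val_equivariant P Aᶜ hA') hp)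
        (M.res (X := subGSet P Aᶜ hA') (Y := P) Subtype.val (subGSet_val_equivariant P Aᶜ hA') m) := by
  classical
  set O₁ := subGSet P A hA with hO₁
  set O₂ := subGSet P Aᶜ hA' with hO₂
  set Q := FinGSet.sum O₁ O₂ with hQdef
  set e : Q.carrier → P.carrier := Sum.elim Subtype.val Subtype.val with hedef
  have hι₁ := subGSet_val_equivariant P A hA
  have hι₂ := subGSet_val_equivariant P Aᶜ hA'
  have he : IsEquivariant (X := Q) (Y := P) e := by
    rintro g (x | x)
    · exact hι₁ g x
    · exact hι₂ g x
  set einv : P.carrier → Q.carrier :=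
    fun x => if h : x ∈ A then Sum.inl ⟨x, h⟩ else Sum.inr ⟨x, h⟩ with heinvdef
  have hgf : ∀ z, einv (e z) = z := by
    rintro (⟨x, hx⟩ | ⟨x, hx⟩)
    · simp only [heinvdef, hedef, Sum.elim_inl]
      exact dif_pos hx
    · simp only [heinvdef, hedef, Sum.elim_inr]
      exact dif_neg hx
  have hfg : ∀ x, e (einv x) = x := by
    intro x
    by_cases h : x ∈ A <;> simp [heinvdef, hedef, h]
  have heinv : IsEquivariant (X := P) (Y := Q) einv := inv_equivariant he hgf hfg
  have hinl : IsEquivariant (X := O₁) (Y := Q) Sum.inl := fun _ _ => rfl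
  have hinr : IsEquivariant (X := O₂) (Y := Q) Sum.inr := fun _ _ => rfl
  have hm := tr_res_iso M e he einv heinv hgf hfg m
  conv_lhs => rw [← hm]
  rw [← M.tr_comp e he p hp (comp_equivariant he hp)]
  rw [sum_decomp M hinl hinr (M.res e he m)]
  rw [map_mul]
  rw [← M.tr_comp Sum.inl hinl (p ∘ e) (comp_equivariant he hp)
    (comp_equivariant hinl (comp_equivariant he hp))]
  rw [← M.tr_comp Sum.inr hinr (p ∘ e) (comp_equivariant he hp)
    (comp_equivariant hinr (comp_equivariant he hp))]
  rw [← M.res_comp Sum.inl hinl e he (comp_equivariant hinl he)]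
  rw [← M.res_comp Sum.inr hinr e he (comp_equivariant hinr he)]
  rfl

theorem ge_eq_rmul {X : FinGSet G} (γ : (GeObj G).carrier → X.carrier)
    (hγ : IsEquivariant γ) : γ = fun x : G => x • γ 1 := by
  funext x
  have h := hγ x 1
  rw [smul_eq_mul, mul_one] at h
  exact h

include M in
theorem tr_mem_minSub (S : Submonoid (N (GeObj G))) {X : FinGSet G}
    (γ : (GeObj G).carrier → X.carrier) (hγ : IsEquivariant γ) {t : N (GeObj G)}
    (ht : t ∈ S) : M.tr γ hγ t ∈ minSub M S X :=
  Submonoid.subset_closure (Set.mem_iUnion.2 ⟨γ, Set.mem_iUnion.2 ⟨hγ, ⟨t, ht, rfl⟩⟩⟩)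

include M in
theorem res_ge_mem (S : Submonoid (N (GeObj G)))
    (hinv : ∀ g : G, ∀ s ∈ S, M.res (fun x => x * g) (rmul_equivariant g) s ∈ S)
    (γ : (GeObj G).carrier → (GeObj G).carrier) (hγ : IsEquivariant γ)
    {s : N (GeObj G)} (hs : s ∈ S) : M.res γ hγ s ∈ S := by
  have hfun : γ = fun x : G => x * γ 1 := ge_eq_rmul γ hγ
  rw [res_congr M hfun hγ (rmul_equivariant (γ 1)) s]
  exact hinv (γ 1) s hs

include M in
theorem tr_ge_mem (S : Submonoid (N (GeObj G)))
    (hinv : ∀ g : G, ∀ s ∈ S, M.res (fun x => x * g) (rmul_equivariant g) s ∈ S)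
    (γ : (GeObj G).carrier → (GeObj G).carrier) (hγ : IsEquivariant γ)
    {s : N (GeObj G)} (hs : s ∈ S) : M.tr γ hγ s ∈ S := by
  have hfun : γ = fun x : G => x * γ 1 := ge_eq_rmul γ hγ
  rw [tr_congr M hfun hγ (rmul_equivariant (γ 1)) s,
    tr_eq_res_inv M _ (rmul_equivariant (γ 1)) (fun x => x * (γ 1)⁻¹)
      (rmul_equivariant ((γ 1)⁻¹)) (fun x => by simp [mul_assoc])
      (fun x => by simp [mul_assoc]) s]
  exact hinv ((γ 1)⁻¹) s hs

include M in
theorem tr_res_free_mem (S : Submonoid (N (GeObj G)))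
    (hinv : ∀ g : G, ∀ s ∈ S, M.res (fun x => x * g) (rmul_equivariant g) s ∈ S) :
    ∀ (n : ℕ) (P : FinGSet G), Fintype.card P.carrier = n →
    ∀ (X : FinGSet G) (q : P.carrier → (GeObj G).carrier)
      (hq : IsEquivariant q) (p : P.carrier → X.carrier) (hp : IsEquivariant p)
      (s : N (GeObj G)), s ∈ S → M.tr p hp (M.res q hq s) ∈ minSub M S X := by
  intro n
  induction n using Nat.strong_induction_on with
  | _ n ih =>
  intro P hcard X q hq p hp s hs
  classical
  by_cases hemp : IsEmpty P.carrier
  · rw [tr_from_empty M hemp]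
    exact one_mem _
  · rw [not_isEmpty_iff] at hemp
    obtain ⟨z0⟩ := hemp
    set x0 : P.carrier := (q z0)⁻¹ • z0 with hx0
    have hqx0 : q x0 = 1 := by rw [hq]; simp
    set A : Set P.carrier := Set.range (fun g : G => g • x0) with hAdef
    have hA : ∀ (g : G), ∀ x ∈ A, g • x ∈ A := by
      rintro g x ⟨h, rfl⟩
      exact ⟨g * h, by simp [mul_smul]⟩
    have hA' : ∀ (g : G), ∀ x ∈ Aᶜ, g • x ∈ Aᶜ := by
      intro g x hx hmem
      refine hx ?_
      have := hA g⁻¹ _ hmem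
      rwa [inv_smul_smul] at this
    rw [tr_decomp M p hp A hA hA' (M.res q hq s)]
    have hι₁ := subGSet_val_equivariant P A hA
    have hι₂ := subGSet_val_equivariant P Aᶜ hA'
    apply mul_mem
    · -- the orbit of x0, isomorphic to G/e
      set φ : (GeObj G).carrier → (subGSet P A hA).carrier :=
        fun g => ⟨g • x0, ⟨g, rfl⟩⟩ with hφdef
      have hφ : IsEquivariant φ := by
        intro a g
        exact Subtype.ext (mul_smul a g x0)
      set ψ : (subGSet P A hA).carrier → (GeObj G).carrier :=
        fun x => q x.1 with hψdef
      have hψ : IsEquivariant ψ := comp_equivariant hι₁ hq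
      have hψφ : ∀ g, ψ (φ g) = g := by
        intro g
        simp only [hψdef, hφdef]
        rw [hq, hqx0]
        simp
      have hφψ : ∀ x, φ (ψ x) = x := by
        rintro ⟨x, g, rfl⟩
        apply Subtype.ext
        simp only [hψdef, hφdef]
        rw [hq, hqx0]
        simp [mul_smul]
      rw [← M.res_comp (X := subGSet P A hA) (Y := P) Subtype.val hι₁ q hq (comp_equivariant hι₁ hq)]
      rw [← tr_res_iso M φ hφ ψ hψ hψφ hφψ (M.res (q ∘ Subtype.val) _ s)]
      rw [← M.tr_comp φ hφ (p ∘ Subtype.val) (comp_equivariant hι₁ hp)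
        (comp_equivariant hφ (comp_equivariant hι₁ hp))]
      rw [← M.res_comp φ hφ (q ∘ Subtype.val) (comp_equivariant hι₁ hq)
        (comp_equivariant hφ (comp_equivariant hι₁ hq))]
      exact tr_mem_minSub M S _ _
        (res_ge_mem M S hinv _ (comp_equivariant hφ (comp_equivariant hι₁ hq)) hs)
    · -- the complement, smaller cardinality
      have hx0A : x0 ∈ A := ⟨1, one_smul G x0⟩
      have hlt : Fintype.card (subGSet P Aᶜ hA').carrier < n := by
        rw [← hcard]
        exact Fintype.card_lt_of_injective_of_notMem Subtype.val Subtype.val_injective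
          (by rwa [Subtype.range_val, Set.notMem_compl_iff])
      rw [← M.res_comp (X := subGSet P Aᶜ hA') (Y := P) Subtype.val hι₂ q hq (comp_equivariant hι₂ hq)]
      exact ih _ hlt (subGSet P Aᶜ hA') (by convert rfl) X (q ∘ Subtype.val) (comp_equivariant hι₂ hq)
        (p ∘ Subtype.val) (comp_equivariant hι₂ hp) s hs

/-- The pullback of two equivariant maps, as a `G`-set. -/
@[reducible] noncomputable def pullbackG {X W Y : FinGSet G} (f : X.carrier → Y.carrier)
    (hf : IsEquivariant f) (g : W.carrier → Y.carrier) (hg : IsEquivariant g) :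
    FinGSet G where
  carrier := {q : X.carrier × W.carrier // f q.1 = g q.2}
  fin := Fintype.ofFinite _
  act :=
    { smul := fun a z => ⟨(a • z.1.1, a • z.1.2), by rw [hf, hg, z.2]⟩
      one_smul := fun z => Subtype.ext (Prod.ext (one_smul _ _) (one_smul _ _))
      mul_smul := fun a b z => Subtype.ext (Prod.ext (mul_smul _ _ _) (mul_smul _ _ _)) }

include M in
theorem res_tr_pullback {X W Y : FinGSet G} (f : X.carrier → Y.carrier)
    (hf : IsEquivariant f) (g : W.carrier → Y.carrier) (hg : IsEquivariant g)
    (m : N W) :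
    M.res f hf (M.tr g hg m) =
      M.tr (fun z : (pullbackG f hf g hg).carrier => z.1.1) (fun _ _ => rfl)
        (M.res (fun z : (pullbackG f hf g hg).carrier => z.1.2) (fun _ _ => rfl) m) := by
  apply M.mackey f hf g hg _ _ _ _ (fun z : (pullbackG f hf g hg).carrier => z.2)
  constructor
  · intro a b hab
    apply Subtype.ext
    have h := congrArg Subtype.val hab
    exact Prod.ext (congrArg Prod.fst h) (congrArg Prod.snd h)
  · rintro ⟨⟨x, w⟩, h⟩
    exact ⟨⟨(x, w), h⟩, rfl⟩

end Aux

/-- For a saturated `G`-invariant submonoid `S ⊆ M(G/e)`: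
`ℒ_S(X) = γ_{X*}(S)` for every equivariant `γ_X : G/e → X` into a transitive
`X` (in particular this is independent of the choice of `γ_X`); `ℒ_S` is a
semi-Mackey subfunctor with `ℒ_S(G/e) = S`, and it is the minimum semi-Mackey
subfunctor `𝒮` with `S ⊆ 𝒮(G/e)`. -/
theorem minSub_spec {G : Type} [Group G] [Fintype G] {N : FinGSet G → Type}
    [∀ X, CommMonoid (N X)] (M : SemiMackey G N)
    (S : Submonoid (N (GeObj G)))
    (hsat : satSet (S : Set (N (GeObj G))) = (S : Set (N (GeObj G))))
    (hinv : ∀ g : G, ∀ s ∈ S, M.res (fun x => x * g) (rmul_equivariant g) s ∈ S) :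
    (∀ X : FinGSet G, MulAction.IsPretransitive G X.carrier →
      ∀ (γ : (GeObj G).carrier → X.carrier) (hγ : IsEquivariant γ),
        (minSub M S X : Set (N X)) = (M.tr γ hγ) '' (S : Set (N (GeObj G)))) ∧
    (∀ {X Y : FinGSet G} (f : X.carrier → Y.carrier) (hf : IsEquivariant f),
      (∀ s ∈ minSub M S Y, M.res f hf s ∈ minSub M S X) ∧
      (∀ s ∈ minSub M S X, M.tr f hf s ∈ minSub M S Y)) ∧
    minSub M S (GeObj G) = S ∧
    (∀ T : ∀ X : FinGSet G, Submonoid (N X),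
      (∀ {X Y : FinGSet G} (f : X.carrier → Y.carrier) (hf : IsEquivariant f),
        ∀ s ∈ T Y, M.res f hf s ∈ T X) →
      (∀ {X Y : FinGSet G} (f : X.carrier → Y.carrier) (hf : IsEquivariant f),
        ∀ s ∈ T X, M.tr f hf s ∈ T Y) →
      S ≤ T (GeObj G) → ∀ X : FinGSet G, minSub M S X ≤ T X) := by
  classical
  have hres : ∀ {X Y : FinGSet G} (f : X.carrier → Y.carrier) (hf : IsEquivariant f),
      ∀ s ∈ minSub M S Y, M.res f hf s ∈ minSub M S X := by
    intro X Y f hf s hsmem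
    induction hsmem using Submonoid.closure_induction with
    | mem t ht =>
      obtain ⟨γ, hmem⟩ := Set.mem_iUnion.1 ht
      obtain ⟨hγ, hmem⟩ := Set.mem_iUnion.1 hmem
      obtain ⟨u, hu, rfl⟩ := hmem
      rw [res_tr_pullback M f hf γ hγ u]
      exact tr_res_free_mem M S hinv _ _ rfl X _ _ _ _ u hu
    | one => rw [map_one]; exact one_mem _
    | mul a b _ _ iha ihb => rw [map_mul]; exact mul_mem iha ihb
  have htr : ∀ {X Y : FinGSet G} (f : X.carrier → Y.carrier) (hf : IsEquivariant f),
      ∀ s ∈ minSub M S X, M.tr f hf s ∈ minSub M S Y := by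
    intro X Y f hf s hsmem
    induction hsmem using Submonoid.closure_induction with
    | mem t ht =>
      obtain ⟨γ, hmem⟩ := Set.mem_iUnion.1 ht
      obtain ⟨hγ, hmem⟩ := Set.mem_iUnion.1 hmem
      obtain ⟨u, hu, rfl⟩ := hmem
      rw [← M.tr_comp γ hγ f hf (comp_equivariant hγ hf)]
      exact tr_mem_minSub M S _ _ hu
    | one => rw [map_one]; exact one_mem _
    | mul a b _ _ iha ihb => rw [map_mul]; exact mul_mem iha ihb
  refine ⟨?_, fun {X Y} f hf => ⟨hres f hf, htr f hf⟩, ?_, ?_⟩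
  · -- transitive case: minSub is the image of S under any transfer from G/e
    intro X hX γ hγ
    apply subset_antisymm
    · have hle : minSub M S X ≤ Submonoid.map (M.tr γ hγ) S := by
        refine Submonoid.closure_le.mpr ?_
        intro x hx
        obtain ⟨δ, hmem⟩ := Set.mem_iUnion.1 hx
        obtain ⟨hδ, hmem⟩ := Set.mem_iUnion.1 hmem
        obtain ⟨u, hu, rfl⟩ := hmem
        obtain ⟨h, hh⟩ := hX.exists_smul_eq (γ 1) (δ 1)
        have hδeq : δ = γ ∘ (fun x : G => x * h) := by
          funext x
          show δ x = γ (x * h)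
          rw [congrFun (ge_eq_rmul δ hδ) x, congrFun (ge_eq_rmul γ hγ) (x * h),
            ← hh, mul_smul]
        rw [tr_congr M hδeq hδ (comp_equivariant (rmul_equivariant h) hγ) u,
          M.tr_comp (fun x : G => x * h) (rmul_equivariant h) γ hγ
            (comp_equivariant (rmul_equivariant h) hγ) u]
        exact ⟨_, tr_ge_mem M S hinv _ (rmul_equivariant h) hu, rfl⟩
      intro x hx
      exact (Submonoid.coe_map (M.tr γ hγ) S) ▸ hle hx
    · rintro x ⟨u, hu, rfl⟩
      exact tr_mem_minSub M S γ hγ hu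
  · -- value at G/e is S
    apply le_antisymm
    · refine Submonoid.closure_le.mpr ?_
      intro x hx
      obtain ⟨δ, hmem⟩ := Set.mem_iUnion.1 hx
      obtain ⟨hδ, hmem⟩ := Set.mem_iUnion.1 hmem
      obtain ⟨u, hu, rfl⟩ := hmem
      exact tr_ge_mem M S hinv δ hδ hu
    · intro s hs
      have h := M.tr_id (GeObj G) (id_equivariant _) s
      rw [← h]
      exact tr_mem_minSub M S id (id_equivariant _) hs
  · -- minimality
    intro T hTres hTtr hTS X
    refine Submonoid.closure_le.mpr ?_
    intro x hx
    obtain ⟨δ, hmem⟩ := Set.mem_iUnion.1 hx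
    obtain ⟨hδ, hmem⟩ := Set.mem_iUnion.1 hmem
    obtain ⟨u, hu, rfl⟩ := hmem
    exact hTtr δ hδ u (hTS hu)
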